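/- Let r be even, s ≥ 3, t = r/2, and let H = Θ_t^r(ℓ_1,…,ℓ_s) be the r-uniform theta hypergraph with ℓ_1 ≤ ℓ_2 ≤ … ≤ ℓ_s. Then χ^e(H) = 3 if ℓ_1 = 1 and ℓ_i ≡ 1 (mod 4) for all 2 ≤ i ≤ s; χ^e(H) = 1 if ℓ_i = 2 for all 1 ≤ i ≤ s; and χ^e(H) = 2 otherwise. -/

import Mathlib

open Finset

open Classical in
/-- `σ^e(v) = Σ_{e ∋ v} w(e)` for a hypergraph with edge set `E`. -/
noncomputable def sigmaE {V : Type*} [Fintype V] (E : Finset (Finset V))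
    (w : Finset V → ℕ) (v : V) : ℕ :=
  ∑ e ∈ E.filter (fun e => v ∈ e), w e

/-- The hypergraph with edge set `E` admits an edge weighting with weights in
`{1,…,k}` such that `σ^e` is a proper vertex coloring: every edge with at least
two vertices contains two vertices with distinct colors. -/
def HasNSDEdgeWeighting {V : Type*} [Fintype V] (E : Finset (Finset V)) (k : ℕ) : Prop :=
  ∃ w : Finset V → ℕ, (∀ e ∈ E, 1 ≤ w e ∧ w e ≤ k) ∧
    ∀ e ∈ E, 2 ≤ e.card → ∃ u ∈ e, ∃ v ∈ e, sigmaE E w u ≠ sigmaE E w v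

/-- The vertex type of the `r`-uniform `t`-tight theta hypergraph
`Θ_t^r(L 0, …, L (s-1))`: `t` common initial vertices `x_1,…,x_t`,
`t` common final vertices `y_1,…,y_t`, and for each path `i` its
`L i * (r-t) - t` internal vertices. -/
def ThetaVert (r t s : ℕ) (L : Fin s → ℕ) : Type :=
  (Fin t ⊕ Fin t) ⊕ (Σ i : Fin s, Fin (L i * (r - t) - t))

instance (r t s : ℕ) (L : Fin s → ℕ) : Fintype (ThetaVert r t s L) := by
  unfold ThetaVert; infer_instance

instance (r t s : ℕ) (L : Fin s → ℕ) : DecidableEq (ThetaVert r t s L) := by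
  unfold ThetaVert; infer_instance

/-- Membership of a vertex of the theta hypergraph in the `m`-th edge
(0-indexed, `m < L i`) of the `i`-th path.  In the `i`-th path, the vertex
`x_a` has (0-indexed) position `a`, the vertex `y_b` has position
`L i * (r-t) + b`, and the `c`-th internal vertex of path `i` has position
`t + c`; the `m`-th edge consists of the vertices at positions
`m*(r-t), …, m*(r-t) + r - 1`. -/
def thetaMem (r t : ℕ) {s : ℕ} (L : Fin s → ℕ) (i : Fin s) (m : ℕ) :
    ThetaVert r t s L → Prop
  | Sum.inl (Sum.inl a) =>
      m * (r - t) ≤ (a : ℕ) ∧ (a : ℕ) < m * (r - t) + r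
  | Sum.inl (Sum.inr b) =>
      m * (r - t) ≤ L i * (r - t) + (b : ℕ) ∧ L i * (r - t) + (b : ℕ) < m * (r - t) + r
  | Sum.inr ⟨i', c⟩ =>
      i' = i ∧ m * (r - t) ≤ t + (c : ℕ) ∧ t + (c : ℕ) < m * (r - t) + r

open Classical in
/-- The edge set of the `r`-uniform `t`-tight theta hypergraph with `s` paths of
lengths `L 0, …, L (s-1)`. -/
noncomputable def thetaEdges (r t : ℕ) {s : ℕ} (L : Fin s → ℕ) :
    Finset (Finset (ThetaVert r t s L)) :=
  (Finset.univ : Finset (Σ i : Fin s, Fin (L i))).image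
    (fun p => Finset.univ.filter (fun v => thetaMem r t L p.1 (p.2 : ℕ) v))

section ThetaAux

open Classical

variable {t s : ℕ} (L : Fin s → ℕ)

local notation:50 x:51 " ∈ᵥ " e:51 => @Membership.mem (ThetaVert _ _ _ _) _ _ e x

open Classical in
noncomputable def tEdge (t : ℕ) {s : ℕ} (L : Fin s → ℕ) (p : Σ i : Fin s, Fin (L i)) :
    Finset (ThetaVert (2*t) t s L) :=
  Finset.univ.filter (fun v => thetaMem (2*t) t L p.1 (p.2 : ℕ) v)

lemma thetaEdges_eq_image :
    thetaEdges (2*t) t L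
      = (Finset.univ : Finset (Σ i : Fin s, Fin (L i))).image (tEdge t L) := rfl

/-- abstract data -/
def SXv (W : Fin s → ℕ → ℕ) : ℕ := ∑ i : Fin s, W i 0

def SYv (W : Fin s → ℕ → ℕ) : ℕ := ∑ i : Fin s, W i (L i - 1)

def Bv (W : Fin s → ℕ → ℕ) (i : Fin s) (b : ℕ) : ℕ :=
  if b = 0 then SXv W else if b = L i then SYv L W else W i (b-1) + W i b

def CondW (W : Fin s → ℕ → ℕ) : Prop :=
  ∀ i : Fin s, ∀ m : ℕ, m < L i → Bv L W i m ≠ Bv L W i (m+1)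

lemma block_iff {t : ℕ} (ht : 0 < t) (m p : ℕ) :
    (m*t ≤ p ∧ p < m*t + 2*t) ↔ (p/t = m ∨ p/t = m+1) := by
  have h1 : m * t ≤ p ↔ m ≤ p / t := (Nat.le_div_iff_mul_le ht).symm
  have h2 : p < m*t + 2*t ↔ p / t < m + 2 := by
    rw [Nat.div_lt_iff_lt_mul ht, add_mul]
  rw [h1, h2]; omega

lemma mem_tEdge_x (ht : 1 ≤ t) (a : Fin t) (p : Σ i : Fin s, Fin (L i)) :
    (Sum.inl (Sum.inl a) : ThetaVert (2*t) t s L) ∈ᵥ tEdge t L p ↔ (p.2 : ℕ) = 0 := by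
  classical
  have htt : 2*t - t = t := by omega
  rw [tEdge]; refine (Finset.mem_filter (s := (Finset.univ : Finset (ThetaVert (2*t) t s L))) (p := fun v => thetaMem (2*t) t L p.1 (p.2 : ℕ) v)).trans ((and_iff_right (Finset.mem_univ _)).trans ?_)
  show ((p.2:ℕ) * (2*t - t) ≤ (a : ℕ) ∧ (a : ℕ) < (p.2:ℕ) * (2*t - t) + 2*t) ↔ _
  rw [htt, block_iff ht]
  have h0 : (a:ℕ)/t = 0 := Nat.div_eq_of_lt a.2
  omega

lemma mem_tEdge_y (ht : 1 ≤ t) (b : Fin t) (p : Σ i : Fin s, Fin (L i)) :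
    (Sum.inl (Sum.inr b) : ThetaVert (2*t) t s L) ∈ᵥ tEdge t L p ↔ (p.2 : ℕ) + 1 = L p.1 := by
  classical
  have htt : 2*t - t = t := by omega
  rw [tEdge]; refine (Finset.mem_filter (s := (Finset.univ : Finset (ThetaVert (2*t) t s L))) (p := fun v => thetaMem (2*t) t L p.1 (p.2 : ℕ) v)).trans ((and_iff_right (Finset.mem_univ _)).trans ?_)
  show ((p.2:ℕ) * (2*t - t) ≤ L p.1 * (2*t - t) + (b:ℕ)
      ∧ L p.1 * (2*t - t) + (b:ℕ) < (p.2:ℕ) * (2*t - t) + 2*t) ↔ _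
  rw [htt, block_iff ht]
  have h0 : (L p.1 * t + (b:ℕ))/t = L p.1 := by
    rw [add_comm, Nat.add_mul_div_right _ _ ht, Nat.div_eq_of_lt b.2, zero_add]
  have hm := p.2.2
  omega

lemma mem_tEdge_int (ht : 1 ≤ t) (i' : Fin s) (c : Fin (L i' * (2*t - t) - t))
    (p : Σ i : Fin s, Fin (L i)) :
    (Sum.inr ⟨i', c⟩ : ThetaVert (2*t) t s L) ∈ᵥ tEdge t L p ↔
      i' = p.1 ∧ ((c : ℕ)/t + 1 = (p.2 : ℕ) ∨ (c : ℕ)/t = (p.2 : ℕ)) := by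
  classical
  have htt : 2*t - t = t := by omega
  rw [tEdge]; refine (Finset.mem_filter (s := (Finset.univ : Finset (ThetaVert (2*t) t s L))) (p := fun v => thetaMem (2*t) t L p.1 (p.2 : ℕ) v)).trans ((and_iff_right (Finset.mem_univ _)).trans ?_)
  show (i' = p.1 ∧ (p.2:ℕ) * (2*t - t) ≤ t + (c:ℕ)
      ∧ t + (c:ℕ) < (p.2:ℕ) * (2*t - t) + 2*t) ↔ _
  generalize (c:ℕ) = cv
  rw [htt]
  have hb := block_iff ht (p.2:ℕ) (t + cv)
  have h0 : (t + cv)/t = cv/t + 1 := by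
    rw [add_comm, Nat.add_div_right _ ht]
  constructor
  · rintro ⟨h1, h2⟩; exact ⟨h1, by have := hb.1 h2; omega⟩
  · rintro ⟨h1, h2⟩; exact ⟨h1, hb.2 (by omega)⟩

lemma int_bound (ht : 1 ≤ t) {i : Fin s} {c : ℕ} (hc : c < L i * (2*t - t) - t) :
    c / t + 1 < L i := by
  have htt : 2*t - t = t := by omega
  rw [htt] at hc
  have h1 : c < (L i - 1) * t := by
    have : (L i - 1) * t = L i * t - t := by rw [Nat.sub_mul, one_mul]
    omega
  have := (Nat.div_lt_iff_lt_mul ht).2 h1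
  -- c / t < L i - 1
  have h2 : 0 < L i := by
    by_contra h; push_neg at h
    interval_cases (L i) <;> simp_all
  omega

lemma tEdge_inj (ht : 1 ≤ t) (hL1 : ∀ i, 1 ≤ L i)
    (hone : ∀ i j, L i = 1 → L j = 1 → i = j) :
    Function.Injective (tEdge t L) := by
  classical
  have htt : 2*t - t = t := by omega
  have wit : ∀ (i : Fin s) (b : ℕ), 1 ≤ b → b + 1 ≤ L i →
      ∃ c : Fin (L i * (2*t - t) - t), (c:ℕ) = (b-1)*t := by
    intro i b hb1 hb2
    refine ⟨⟨(b-1)*t, ?_⟩, rfl⟩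
    rw [htt]
    have h1 : (b-1)*t < (L i - 1) * t := by
      apply (Nat.mul_lt_mul_right (by omega : 0 < t)).2; omega
    have h2 : (L i - 1) * t = L i * t - t := by rw [Nat.sub_mul, one_mul]
    omega
  intro p q h
  obtain ⟨i, m⟩ := p; obtain ⟨j, m'⟩ := q
  have hij : i = j := by
    rcases Nat.lt_or_ge (L i) 2 with h2 | h2
    · rcases Nat.lt_or_ge (L j) 2 with h3 | h3
      · exact hone i j (by have := hL1 i; omega) (by have := hL1 j; omega)
      · obtain ⟨c, hc⟩ := wit j (max (m':ℕ) 1) (le_max_right _ _) (by have := m'.2; omega)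
        have hq : (c:ℕ)/t = max (m':ℕ) 1 - 1 := by rw [hc, Nat.mul_div_cancel _ ht]
        have hmem : (Sum.inr ⟨j, c⟩ : ThetaVert (2*t) t s L) ∈ᵥ tEdge t L ⟨j, m'⟩ := by
          rw [mem_tEdge_int L ht]
          refine ⟨rfl, ?_⟩; dsimp only; omega
        rw [← h, mem_tEdge_int L ht] at hmem
        exact hmem.1.symm
    · obtain ⟨c, hc⟩ := wit i (max (m:ℕ) 1) (le_max_right _ _) (by have := m.2; omega)
      have hq : (c:ℕ)/t = max (m:ℕ) 1 - 1 := by rw [hc, Nat.mul_div_cancel _ ht]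
      have hmem : (Sum.inr ⟨i, c⟩ : ThetaVert (2*t) t s L) ∈ᵥ tEdge t L ⟨i, m⟩ := by
        rw [mem_tEdge_int L ht]
        refine ⟨rfl, ?_⟩; dsimp only; omega
      rw [h, mem_tEdge_int L ht] at hmem
      exact hmem.1
  subst hij
  suffices hmm : (m:ℕ) = (m':ℕ) by
    exact Sigma.ext rfl (heq_of_eq (Fin.ext hmm))
  by_contra hne
  rcases Nat.eq_zero_or_pos (m:ℕ) with h0 | h0
  · have hx : (Sum.inl (Sum.inl ⟨0, ht⟩) : ThetaVert (2*t) t s L) ∈ᵥ tEdge t L ⟨i, m⟩ := by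
      rw [mem_tEdge_x L ht]; exact h0
    rw [h, mem_tEdge_x L ht] at hx
    dsimp only at hx; omega
  rcases Nat.eq_zero_or_pos (m':ℕ) with h0' | h0'
  · have hx : (Sum.inl (Sum.inl ⟨0, ht⟩) : ThetaVert (2*t) t s L) ∈ᵥ tEdge t L ⟨i, m'⟩ := by
      rw [mem_tEdge_x L ht]; exact h0'
    rw [← h, mem_tEdge_x L ht] at hx
    dsimp only at hx; omega
  · obtain ⟨c, hc⟩ := wit i (m:ℕ) h0 (by have := m.2; omega)
    have hq : (c:ℕ)/t = (m:ℕ) - 1 := by rw [hc, Nat.mul_div_cancel _ ht]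
    have hmem : (Sum.inr ⟨i, c⟩ : ThetaVert (2*t) t s L) ∈ᵥ tEdge t L ⟨i, m⟩ := by
      rw [mem_tEdge_int L ht]; refine ⟨rfl, ?_⟩; dsimp only; omega
    rw [h, mem_tEdge_int L ht] at hmem
    dsimp only at hmem
    obtain ⟨c', hc'⟩ := wit i (m':ℕ) h0' (by have := m'.2; omega)
    have hq' : (c':ℕ)/t = (m':ℕ) - 1 := by rw [hc', Nat.mul_div_cancel _ ht]
    have hmem' : (Sum.inr ⟨i, c'⟩ : ThetaVert (2*t) t s L) ∈ᵥ tEdge t L ⟨i, m'⟩ := by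
      rw [mem_tEdge_int L ht]; refine ⟨rfl, ?_⟩; dsimp only; omega
    rw [← h, mem_tEdge_int L ht] at hmem'
    dsimp only at hmem'; omega

/-- weight on an edge index coming from a weighting of the edge set -/
noncomputable def Wof (w : Finset (ThetaVert (2*t) t s L) → ℕ) (i : Fin s) (m : ℕ) : ℕ :=
  if h : m < L i then w (tEdge t L ⟨i, ⟨m, h⟩⟩) else 1

lemma sigma_eq (ht : 1 ≤ t) (hL1 : ∀ i, 1 ≤ L i)
    (hone : ∀ i j, L i = 1 → L j = 1 → i = j)
    (w : Finset (ThetaVert (2*t) t s L) → ℕ) (v : ThetaVert (2*t) t s L) :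
    sigmaE (thetaEdges (2*t) t L) w v
      = ∑ p ∈ Finset.univ.filter (fun p => v ∈ tEdge t L p), w (tEdge t L p) := by
  classical
  rw [sigmaE, thetaEdges_eq_image, Finset.sum_filter,
    Finset.sum_image (fun x _ y _ hxy => tEdge_inj L ht hL1 hone hxy)]
  conv_rhs => rw [Finset.sum_filter]
  exact Finset.sum_congr rfl fun x _ => by congr

lemma sigma_x (ht : 1 ≤ t) (hL1 : ∀ i, 1 ≤ L i)
    (hone : ∀ i j, L i = 1 → L j = 1 → i = j)
    (w : Finset (ThetaVert (2*t) t s L) → ℕ) (a : Fin t) :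
    sigmaE (thetaEdges (2*t) t L) w (Sum.inl (Sum.inl a)) = SXv (Wof L w) := by
  classical
  erw [sigma_eq L ht hL1 hone]
  have hfe : (Finset.univ.filter
      (fun p : Σ i : Fin s, Fin (L i) => (Sum.inl (Sum.inl a) : ThetaVert (2*t) t s L) ∈ᵥ tEdge t L p))
      = Finset.univ.image (fun i : Fin s => (⟨i, ⟨0, hL1 i⟩⟩ : Σ i : Fin s, Fin (L i))) := by
    ext ⟨j, mm⟩
    simp only [Finset.mem_filter, Finset.mem_univ, true_and, Finset.mem_image,
      mem_tEdge_x L ht]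
    constructor
    · intro h0
      exact ⟨j, Sigma.ext rfl (heq_of_eq (Fin.ext h0.symm))⟩
    · rintro ⟨i, hi⟩
      cases hi
      rfl
  convert (Finset.sum_congr (g := fun p => w (tEdge t L p)) hfe (fun _ _ => rfl)).trans ?_ using 3
  rw [Finset.sum_image (by intro x _ y _ hxy; exact congrArg Sigma.fst hxy)]
  apply Finset.sum_congr rfl
  intro i _
  simp only [Wof]
  rw [dif_pos (show 0 < L i from hL1 i)]

lemma sigma_y (ht : 1 ≤ t) (hL1 : ∀ i, 1 ≤ L i)
    (hone : ∀ i j, L i = 1 → L j = 1 → i = j)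
    (w : Finset (ThetaVert (2*t) t s L) → ℕ) (b : Fin t) :
    sigmaE (thetaEdges (2*t) t L) w (Sum.inl (Sum.inr b)) = SYv L (Wof L w) := by
  classical
  erw [sigma_eq L ht hL1 hone]
  have hfe : (Finset.univ.filter
      (fun p : Σ i : Fin s, Fin (L i) => (Sum.inl (Sum.inr b) : ThetaVert (2*t) t s L) ∈ᵥ tEdge t L p))
      = Finset.univ.image (fun i : Fin s => (⟨i, ⟨L i - 1, by have := hL1 i; omega⟩⟩ : Σ i : Fin s, Fin (L i))) := by
    ext ⟨j, mm⟩
    simp only [Finset.mem_filter, Finset.mem_univ, true_and, Finset.mem_image,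
      mem_tEdge_y L ht]
    constructor
    · intro h0
      exact ⟨j, Sigma.ext rfl (heq_of_eq (Fin.ext (show L j - 1 = (mm:ℕ) by omega)))⟩
    · rintro ⟨i, hi⟩
      cases hi
      have := hL1 j
      show L j - 1 + 1 = L j
      omega
  convert (Finset.sum_congr (g := fun p => w (tEdge t L p)) hfe (fun _ _ => rfl)).trans ?_ using 3
  rw [Finset.sum_image (by intro x _ y _ hxy; exact congrArg Sigma.fst hxy)]
  apply Finset.sum_congr rfl
  intro i _
  simp only [Wof]
  rw [dif_pos (show L i - 1 < L i by have := hL1 i; omega)]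

lemma sigma_int (ht : 1 ≤ t) (hL1 : ∀ i, 1 ≤ L i)
    (hone : ∀ i j, L i = 1 → L j = 1 → i = j)
    (w : Finset (ThetaVert (2*t) t s L) → ℕ) (i : Fin s) (c : Fin (L i * (2*t - t) - t)) :
    sigmaE (thetaEdges (2*t) t L) w (Sum.inr ⟨i, c⟩)
      = Wof L w i ((c : ℕ)/t) + Wof L w i ((c : ℕ)/t + 1) := by
  classical
  have hq1 : (c:ℕ)/t + 1 < L i := int_bound L ht c.2
  set q : ℕ := (c:ℕ)/t with hqdef
  have hA : (⟨i, ⟨q, by omega⟩⟩ : Σ i : Fin s, Fin (L i)) ≠ ⟨i, ⟨q+1, hq1⟩⟩ := by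
    intro hcon
    have := congrArg (fun p : Σ i : Fin s, Fin (L i) => (p.2 : ℕ)) hcon
    simp at this
  erw [sigma_eq L ht hL1 hone]
  have hfe : (Finset.univ.filter
      (fun p : Σ i : Fin s, Fin (L i) => (Sum.inr ⟨i, c⟩ : ThetaVert (2*t) t s L) ∈ᵥ tEdge t L p))
      = {⟨i, ⟨q, by omega⟩⟩, ⟨i, ⟨q+1, hq1⟩⟩} := by
    ext ⟨j, mm⟩
    simp only [Finset.mem_filter, Finset.mem_univ, true_and, Finset.mem_insert,
      Finset.mem_singleton, mem_tEdge_int L ht]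
    constructor
    · rintro ⟨rfl, h2⟩
      rcases h2 with h2 | h2
      · right; exact Sigma.ext rfl (heq_of_eq (Fin.ext (show (mm:ℕ) = q + 1 by omega)))
      · left; exact Sigma.ext rfl (heq_of_eq (Fin.ext (show (mm:ℕ) = q by omega)))
    · rintro (hi | hi) <;> cases hi
      · exact ⟨rfl, Or.inr rfl⟩
      · exact ⟨rfl, Or.inl rfl⟩
  convert (Finset.sum_congr (g := fun p => w (tEdge t L p)) hfe (fun _ _ => rfl)).trans ?_ using 3
  rw [Finset.sum_pair hA]
  simp only [Wof]
  rw [dif_pos hq1, dif_pos (show q < L i by omega)]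

/-- every vertex of an edge has σ-value one of the two block values -/
lemma sigma_mem_edge (ht : 1 ≤ t) (hL1 : ∀ i, 1 ≤ L i)
    (hone : ∀ i j, L i = 1 → L j = 1 → i = j)
    (w : Finset (ThetaVert (2*t) t s L) → ℕ) (p : Σ i : Fin s, Fin (L i))
    (z : ThetaVert (2*t) t s L) (hz : z ∈ tEdge t L p) :
    sigmaE (thetaEdges (2*t) t L) w z = Bv L (Wof L w) p.1 (p.2 : ℕ) ∨
    sigmaE (thetaEdges (2*t) t L) w z = Bv L (Wof L w) p.1 ((p.2 : ℕ)+1) := by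
  classical
  obtain ⟨i, m⟩ := p
  rcases z with (a | b) | ⟨j, c⟩
  · rw [mem_tEdge_x L ht] at hz
    left
    rw [sigma_x L ht hL1 hone, Bv]
    dsimp only at hz ⊢
    rw [hz, if_pos rfl]
  · rw [mem_tEdge_y L ht] at hz
    right
    rw [sigma_y L ht hL1 hone, Bv]
    dsimp only at hz ⊢
    rw [if_neg (by omega), if_pos (by omega)]
  · rw [mem_tEdge_int L ht] at hz
    obtain ⟨rfl, h2⟩ := hz
    dsimp only at h2 ⊢
    rw [sigma_int L ht hL1 hone]
    have hq1 : (c:ℕ)/t + 1 < L j := int_bound L ht c.2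
    obtain ⟨q, hqdef⟩ : ∃ q, (c:ℕ)/t = q := ⟨_, rfl⟩
    rw [hqdef] at hq1 h2 ⊢
    have hn1 : ¬(q + 1 = 0) := by omega
    have hn2 : ¬(q + 1 = L j) := by omega
    have hB : Bv L (Wof L w) j (q + 1)
        = Wof L w j q + Wof L w j (q+1) := by
      rw [Bv, if_neg hn1, if_neg hn2, Nat.add_sub_cancel]
    rcases h2 with h2 | h2
    · left; rw [← h2]; exact hB.symm
    · right; rw [← h2]; exact hB.symm

/-- distinct witnesses in an edge realizing the two block values -/
lemma edge_pair (ht : 1 ≤ t) (hL1 : ∀ i, 1 ≤ L i)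
    (hone : ∀ i j, L i = 1 → L j = 1 → i = j)
    (w : Finset (ThetaVert (2*t) t s L) → ℕ) (p : Σ i : Fin s, Fin (L i)) :
    ∃ u v : ThetaVert (2*t) t s L, u ∈ tEdge t L p ∧ v ∈ tEdge t L p ∧ u ≠ v ∧
      sigmaE (thetaEdges (2*t) t L) w u = Bv L (Wof L w) p.1 (p.2 : ℕ) ∧
      sigmaE (thetaEdges (2*t) t L) w v = Bv L (Wof L w) p.1 ((p.2 : ℕ)+1) := by
  classical
  obtain ⟨i, m⟩ := p
  have htt : 2*t - t = t := by omega
  have hm := m.2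
  have hmul : ∀ a b : ℕ, a < b → a * t < b * t := by
    intro a b hab; exact (Nat.mul_lt_mul_right (by omega : 0 < t)).2 hab
  have hsub : (L i - 1) * t = L i * t - t := by rw [Nat.sub_mul, one_mul]
  by_cases h0 : (m:ℕ) = 0
  · by_cases hLa : (m:ℕ) + 1 = L i
    · refine ⟨Sum.inl (Sum.inl ⟨0, ht⟩), Sum.inl (Sum.inr ⟨0, ht⟩), ?_, ?_,
        fun hcon => by have := congrArg (fun z : ThetaVert (2*t) t s L => match z with | Sum.inl (Sum.inl _) => 0 | _ => 1) hcon; simp at this, ?_, ?_⟩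
      · rw [mem_tEdge_x L ht]; exact h0
      · rw [mem_tEdge_y L ht]; exact hLa
      · rw [sigma_x L ht hL1 hone, Bv]; dsimp only; rw [h0, if_pos rfl]
      · rw [sigma_y L ht hL1 hone, Bv]; dsimp only
        have hn1 : ¬((m:ℕ) + 1 = 0) := by omega
        rw [if_neg hn1, if_pos hLa]
    · have hc : (0:ℕ) < L i * (2*t - t) - t := by
        rw [htt]
        have h2 : 1 * t < L i * t := hmul 1 (L i) (by omega)
        omega
      have hz : ((⟨0, hc⟩ : Fin (L i * (2*t - t) - t)) : ℕ) / t = 0 := Nat.zero_div t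
      have hn1 : ¬((0:ℕ) + 1 = 0) := by omega
      have hn2 : ¬((0:ℕ) + 1 = L i) := by omega
      refine ⟨Sum.inl (Sum.inl ⟨0, ht⟩), Sum.inr ⟨i, ⟨0, hc⟩⟩, ?_, ?_,
        fun hcon => by simp at hcon, ?_, ?_⟩
      · rw [mem_tEdge_x L ht]; exact h0
      · rw [mem_tEdge_int L ht]; refine ⟨rfl, ?_⟩; rw [hz]; dsimp only; omega
      · rw [sigma_x L ht hL1 hone, Bv]; dsimp only; rw [h0, if_pos rfl]
      · rw [sigma_int L ht hL1 hone, hz, Bv]; dsimp only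
        rw [h0, if_neg hn1, if_neg hn2]
  · have hcu : ((m:ℕ)-1) * t < L i * (2*t - t) - t := by
      rw [htt]
      have := hmul ((m:ℕ)-1) (L i - 1) (by omega)
      omega
    have hzu : ((⟨((m:ℕ)-1)*t, hcu⟩ : Fin (L i * (2*t - t) - t)) : ℕ) / t = (m:ℕ) - 1 :=
      Nat.mul_div_cancel _ ht
    have hmemu : (Sum.inr ⟨i, ⟨((m:ℕ)-1)*t, hcu⟩⟩ : ThetaVert (2*t) t s L)
        ∈ᵥ tEdge t L ⟨i, m⟩ := by
      rw [mem_tEdge_int L ht]; refine ⟨rfl, ?_⟩; rw [hzu]; dsimp only; omega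
    have hσu : sigmaE (thetaEdges (2*t) t L) w (Sum.inr ⟨i, ⟨((m:ℕ)-1)*t, hcu⟩⟩)
        = Bv L (Wof L w) i (m:ℕ) := by
      rw [sigma_int L ht hL1 hone, hzu]
      have he : (m:ℕ) - 1 + 1 = (m:ℕ) := by omega
      rw [he, Bv, if_neg h0, if_neg (show ¬((m:ℕ) = L i) by omega)]
    by_cases hLa : (m:ℕ) + 1 = L i
    · refine ⟨Sum.inr ⟨i, ⟨((m:ℕ)-1)*t, hcu⟩⟩, Sum.inl (Sum.inr ⟨0, ht⟩), hmemu, ?_,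
        fun hcon => by simp at hcon, hσu, ?_⟩
      · rw [mem_tEdge_y L ht]; exact hLa
      · rw [sigma_y L ht hL1 hone, Bv]; dsimp only
        have hn1 : ¬((m:ℕ) + 1 = 0) := by omega
        rw [if_neg hn1, if_pos hLa]
    · have hcv : (m:ℕ) * t < L i * (2*t - t) - t := by
        rw [htt]
        have := hmul (m:ℕ) (L i - 1) (by omega)
        omega
      have hzv : ((⟨(m:ℕ)*t, hcv⟩ : Fin (L i * (2*t - t) - t)) : ℕ) / t = (m:ℕ) :=
        Nat.mul_div_cancel _ ht
      have hnv1 : ¬((m:ℕ) + 1 = 0) := by omega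
      have hnv2 : ¬((m:ℕ) + 1 = L i) := hLa
      refine ⟨Sum.inr ⟨i, ⟨((m:ℕ)-1)*t, hcu⟩⟩, Sum.inr ⟨i, ⟨(m:ℕ)*t, hcv⟩⟩, hmemu, ?_, ?_, hσu, ?_⟩
      · rw [mem_tEdge_int L ht]; refine ⟨rfl, ?_⟩; rw [hzv]; dsimp only; omega
      · intro hcon
        have h2 := congrArg (fun z : ThetaVert (2*t) t s L =>
          match z with
          | Sum.inr q => (q.2 : ℕ)
          | _ => 0) hcon
        dsimp only at h2
        have := hmul ((m:ℕ)-1) (m:ℕ) (by omega)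
        omega
      · rw [sigma_int L ht hL1 hone, hzv, Bv, if_neg hnv1, if_neg hnv2, Nat.add_sub_cancel]

/-- congruence for CondW -/
lemma cond_congr (W W' : Fin s → ℕ → ℕ) (h : ∀ i m, m < L i → W i m = W' i m)
    (hL1 : ∀ i, 1 ≤ L i) (hc : CondW L W) : CondW L W' := by
  have hSX : SXv W = SXv W' := Finset.sum_congr rfl fun i _ => h i 0 (hL1 i)
  have hSY : SYv L W = SYv L W' :=
    Finset.sum_congr rfl fun i _ => h i (L i - 1) (by have := hL1 i; omega)
  intro i m hm
  have hB : ∀ b, b ≤ L i → Bv L W i b = Bv L W' i b := by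
    intro b hb
    rw [Bv, Bv]
    split_ifs with hb0 hbL
    · exact hSX
    · exact hSY
    · rw [h i (b-1) (by omega), h i b (by omega)]
  rw [← hB m (by omega), ← hB (m+1) (by omega)]
  exact hc i m hm

open Classical in
noncomputable def wext (W : Fin s → ℕ → ℕ) (e : Finset (ThetaVert (2*t) t s L)) : ℕ :=
  if h : ∃ p : Σ i : Fin s, Fin (L i), tEdge t L p = e then W h.choose.1 (h.choose.2 : ℕ) else 1

lemma wext_tEdge (ht : 1 ≤ t) (hL1 : ∀ i, 1 ≤ L i)
    (hone : ∀ i j, L i = 1 → L j = 1 → i = j) (W : Fin s → ℕ → ℕ)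
    (p : Σ i : Fin s, Fin (L i)) :
    wext L W (tEdge t L p) = W p.1 (p.2 : ℕ) := by
  rw [wext, dif_pos ⟨p, rfl⟩]
  have hch := (⟨p, rfl⟩ : ∃ q : Σ i : Fin s, Fin (L i), tEdge t L q = tEdge t L p).choose_spec
  rw [tEdge_inj L ht hL1 hone hch]

lemma hasNSD_iff (ht : 1 ≤ t) (hL1 : ∀ i, 1 ≤ L i)
    (hone : ∀ i j, L i = 1 → L j = 1 → i = j) (k : ℕ) :
    HasNSDEdgeWeighting (thetaEdges (2*t) t L) k ↔
      ∃ W : Fin s → ℕ → ℕ, (∀ i m, m < L i → 1 ≤ W i m ∧ W i m ≤ k) ∧ CondW L W := by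
  classical
  constructor
  · rintro ⟨w, hb, hp⟩
    refine ⟨Wof L w, ?_, ?_⟩
    · intro i m hm
      have hmem : tEdge t L ⟨i, ⟨m, hm⟩⟩ ∈ thetaEdges (2*t) t L := by
        rw [thetaEdges_eq_image]; exact Finset.mem_image_of_mem _ (Finset.mem_univ _)
      have := hb _ hmem
      rw [Wof, dif_pos hm]
      exact this
    · intro i m hm
      obtain ⟨u, v, hu, hv, huv, hσu, hσv⟩ := edge_pair L ht hL1 hone w ⟨i, ⟨m, hm⟩⟩
      have hmem : tEdge t L ⟨i, ⟨m, hm⟩⟩ ∈ thetaEdges (2*t) t L := by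
        rw [thetaEdges_eq_image]; exact Finset.mem_image_of_mem _ (Finset.mem_univ _)
      have hcard : 2 ≤ (tEdge t L ⟨i, ⟨m, hm⟩⟩).card :=
        Finset.one_lt_card.2 ⟨u, hu, v, hv, huv⟩
      obtain ⟨u', hu', v', hv', hne⟩ := hp _ hmem hcard
      have h1 := sigma_mem_edge L ht hL1 hone w ⟨i,⟨m,hm⟩⟩ u' hu'
      have h2 := sigma_mem_edge L ht hL1 hone w ⟨i,⟨m,hm⟩⟩ v' hv'
      dsimp only at h1 h2
      intro hcon
      rw [hcon] at h1
      rcases h1 with h1 | h1 <;> rcases h2 with h2 | h2 <;> apply hne <;> omega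
  · rintro ⟨W, hb, hc⟩
    refine ⟨wext L W, ?_, ?_⟩
    · intro e he
      rw [thetaEdges_eq_image] at he
      obtain ⟨p, _, rfl⟩ := Finset.mem_image.1 he
      rw [wext_tEdge L ht hL1 hone]
      exact hb p.1 (p.2:ℕ) p.2.2
    · intro e he _
      rw [thetaEdges_eq_image] at he
      obtain ⟨p, _, rfl⟩ := Finset.mem_image.1 he
      obtain ⟨u, v, hu, hv, huv, hσu, hσv⟩ := edge_pair L ht hL1 hone (wext L W) p
      refine ⟨u, hu, v, hv, ?_⟩
      rw [hσu, hσv]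
      have hW : ∀ i m, m < L i → Wof (t := t) L (wext (t := t) L W) i m = W i m := by
        intro i m hm
        rw [Wof, dif_pos hm, wext_tEdge L ht hL1 hone]
      exact cond_congr L W _ (fun i m hm => (hW i m hm).symm) hL1 hc p.1 (p.2:ℕ) p.2.2


/-! ### Combinatorial layer -/

def pat11 (m : ℕ) : ℕ := if m % 4 ≤ 1 then 1 else 2

lemma pat11_bounds (m : ℕ) : 1 ≤ pat11 m ∧ pat11 m ≤ 2 := by
  unfold pat11; split_ifs <;> omega

lemma pat11_step (m : ℕ) : pat11 (m+2) = 3 - pat11 m := by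
  unfold pat11; split_ifs <;> omega

lemma pat11_eval0 {m : ℕ} (h : m % 4 = 0) : pat11 m = 1 := by unfold pat11; split_ifs <;> omega
lemma pat11_eval1 {m : ℕ} (h : m % 4 = 1) : pat11 m = 1 := by unfold pat11; split_ifs <;> omega
lemma pat11_eval2 {m : ℕ} (h : m % 4 = 2) : pat11 m = 2 := by unfold pat11; split_ifs <;> omega
lemma pat11_eval3 {m : ℕ} (h : m % 4 = 3) : pat11 m = 2 := by unfold pat11; split_ifs <;> omega

def pat2 (x y m : ℕ) : ℕ :=
  if m % 4 = 0 then x else if m % 4 = 1 then y else if m % 4 = 2 then 3 - x else 3 - y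

lemma pat2_0 {x y m : ℕ} (h : m % 4 = 0) : pat2 x y m = x := by unfold pat2; split_ifs <;> omega
lemma pat2_1 {x y m : ℕ} (h : m % 4 = 1) : pat2 x y m = y := by unfold pat2; split_ifs <;> omega
lemma pat2_2 {x y m : ℕ} (h : m % 4 = 2) : pat2 x y m = 3 - x := by unfold pat2; split_ifs <;> omega
lemma pat2_3 {x y m : ℕ} (h : m % 4 = 3) : pat2 x y m = 3 - y := by unfold pat2; split_ifs <;> omega

lemma pat2_bounds {x y : ℕ} (hx : 1 ≤ x ∧ x ≤ 2) (hy : 1 ≤ y ∧ y ≤ 2) (m : ℕ) :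
    1 ≤ pat2 x y m ∧ pat2 x y m ≤ 2 := by
  unfold pat2; split_ifs <;> omega

lemma pat2_step {x y : ℕ} (hx : 1 ≤ x ∧ x ≤ 2) (hy : 1 ≤ y ∧ y ≤ 2) (m : ℕ) :
    pat2 x y (m+2) = 3 - pat2 x y m := by
  unfold pat2; split_ifs <;> omega

lemma pat2_last_eval (x y ℓ : ℕ) (hℓ : 1 ≤ ℓ) :
    pat2 x y (ℓ - 1)
      = if ℓ % 4 = 1 then x else if ℓ % 4 = 2 then y else if ℓ % 4 = 3 then 3 - x
        else 3 - y := by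
  have h4 : ℓ % 4 = 0 ∨ ℓ % 4 = 1 ∨ ℓ % 4 = 2 ∨ ℓ % 4 = 3 := by omega
  rcases h4 with h | h | h | h
  · rw [pat2_3 (by omega)]; simp [h]
  · rw [pat2_0 (by omega)]; simp [h]
  · rw [pat2_1 (by omega)]; simp [h]
  · rw [pat2_2 (by omega)]; simp [h]

lemma pat2_e_eval (x y ℓ : ℕ) (hℓ : 2 ≤ ℓ) :
    pat2 x y (ℓ - 2) + pat2 x y (ℓ - 1)
      = if ℓ % 4 = 1 then (3 - y) + x else if ℓ % 4 = 2 then x + y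
        else if ℓ % 4 = 3 then y + (3 - x) else (3 - x) + (3 - y) := by
  have h4 : ℓ % 4 = 0 ∨ ℓ % 4 = 1 ∨ ℓ % 4 = 2 ∨ ℓ % 4 = 3 := by omega
  rcases h4 with h | h | h | h
  · rw [pat2_2 (by omega), pat2_3 (by omega)]; simp [h]
  · rw [pat2_3 (by omega), pat2_0 (by omega)]; simp [h]
  · rw [pat2_0 (by omega), pat2_1 (by omega)]; simp [h]
  · rw [pat2_1 (by omega), pat2_2 (by omega)]; simp [h]

section Comb

variable {s : ℕ} (L : Fin s → ℕ)

lemma sum_ite_one (j : Fin s) (u v : ℕ) :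
    ∑ i : Fin s, (if i = j then u else v) = u + (s-1) * v := by
  classical
  rw [← Finset.add_sum_erase _ _ (Finset.mem_univ j), if_pos rfl]
  congr 1
  rw [Finset.sum_congr rfl (fun i hi => if_neg (Finset.ne_of_mem_erase hi)),
    Finset.sum_const, smul_eq_mul, Finset.card_erase_of_mem (Finset.mem_univ j),
    Finset.card_univ, Fintype.card_fin]

lemma sum_ite_two (j k : Fin s) (hjk : j ≠ k) (u v w : ℕ) :
    ∑ i : Fin s, (if i = j then u else if i = k then v else w) = u + v + (s-2) * w := by
  classical
  rw [← Finset.add_sum_erase _ _ (Finset.mem_univ j), if_pos rfl]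
  have hk : k ∈ Finset.univ.erase j := Finset.mem_erase.2 ⟨hjk.symm, Finset.mem_univ k⟩
  rw [← Finset.add_sum_erase _ _ hk, if_neg hjk.symm, if_pos rfl, ← add_assoc]
  congr 1
  have : ∀ i ∈ (Finset.univ.erase j).erase k,
      (if i = j then u else if i = k then v else w) = w := by
    intro i hi
    rw [if_neg (Finset.ne_of_mem_erase (Finset.mem_of_mem_erase hi)),
      if_neg (Finset.ne_of_mem_erase hi)]
  rw [Finset.sum_congr rfl this, Finset.sum_const, smul_eq_mul,
    Finset.card_erase_of_mem hk, Finset.card_erase_of_mem (Finset.mem_univ j),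
    Finset.card_univ, Fintype.card_fin, show s - 1 - 1 = s - 2 by omega]

lemma sum_ite_pred (P : Fin s → Prop) [DecidablePred P] (u v : ℕ) :
    ∑ i : Fin s, (if P i then u else v)
      = (Finset.univ.filter P).card * u + (s - (Finset.univ.filter P).card) * v := by
  classical
  rw [Finset.sum_ite, Finset.sum_const, Finset.sum_const, smul_eq_mul, smul_eq_mul]
  have h := Finset.card_filter_add_card_filter_not (s := (Finset.univ : Finset (Fin s))) P
  rw [Finset.card_univ, Fintype.card_fin] at h
  congr 2
  omega

lemma SX_pat (a0 a1 : Fin s → ℕ) :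
    SXv (fun i m => pat2 (a0 i) (a1 i) m) = ∑ i : Fin s, a0 i :=
  Finset.sum_congr rfl (fun i _ => pat2_0 (by norm_num))

lemma SY_pat (hL1 : ∀ i, 1 ≤ L i) (a0 a1 : Fin s → ℕ) :
    SYv L (fun i m => pat2 (a0 i) (a1 i) m)
      = ∑ i : Fin s, pat2 (a0 i) (a1 i) (L i - 1) := rfl

lemma cond_of_pat (hL1 : ∀ i, 1 ≤ L i) (a0 a1 : Fin s → ℕ)
    (hb : ∀ i, (1 ≤ a0 i ∧ a0 i ≤ 2) ∧ (1 ≤ a1 i ∧ a1 i ≤ 2))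
    (hx : ∀ i, 2 ≤ L i → SXv (fun i m => pat2 (a0 i) (a1 i) m) ≠ a0 i + a1 i)
    (hy : ∀ i, 2 ≤ L i → SYv L (fun i m => pat2 (a0 i) (a1 i) m)
        ≠ pat2 (a0 i) (a1 i) (L i - 2) + pat2 (a0 i) (a1 i) (L i - 1))
    (h1 : ∀ i, L i = 1 → SXv (fun i m => pat2 (a0 i) (a1 i) m)
        ≠ SYv L (fun i m => pat2 (a0 i) (a1 i) m)) :
    CondW L (fun i m => pat2 (a0 i) (a1 i) m) := by
  intro i m hm
  rcases Nat.eq_zero_or_pos m with hm0 | hm0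
  · subst hm0
    have e1 : Bv L (fun i m => pat2 (a0 i) (a1 i) m) i 0
        = SXv (fun i m => pat2 (a0 i) (a1 i) m) := by rw [Bv, if_pos rfl]
    by_cases hLi : L i = 1
    · have e2 : Bv L (fun i m => pat2 (a0 i) (a1 i) m) i (0+1)
          = SYv L (fun i m => pat2 (a0 i) (a1 i) m) := by
        rw [Bv, if_neg (by omega), if_pos (by omega)]
      rw [e1, e2]; exact h1 i hLi
    · have e2 : Bv L (fun i m => pat2 (a0 i) (a1 i) m) i (0+1)
          = a0 i + a1 i := by
        rw [Bv, if_neg (by omega), if_neg (by omega)]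
        show pat2 (a0 i) (a1 i) (0+1-1) + pat2 (a0 i) (a1 i) (0+1) = _
        rw [show (0+1-1 : ℕ) = 0 from rfl, show (0+1 : ℕ) = 1 from rfl,
          pat2_0 (by norm_num), pat2_1 (by norm_num)]
      rw [e1, e2]; exact hx i (by omega)
  · have hBm : Bv L (fun i m => pat2 (a0 i) (a1 i) m) i m
        = pat2 (a0 i) (a1 i) (m-1) + pat2 (a0 i) (a1 i) m := by
      rw [Bv, if_neg (by omega), if_neg (by omega)]
    by_cases hLa : m + 1 = L i
    · have hBm1 : Bv L (fun i m => pat2 (a0 i) (a1 i) m) i (m+1)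
          = SYv L (fun i m => pat2 (a0 i) (a1 i) m) := by
        rw [Bv, if_neg (by omega), if_pos hLa]
      rw [hBm, hBm1]
      have he : pat2 (a0 i) (a1 i) (m-1) + pat2 (a0 i) (a1 i) m
          = pat2 (a0 i) (a1 i) (L i - 2) + pat2 (a0 i) (a1 i) (L i - 1) := by
        congr 2 <;> omega
      rw [he]
      exact fun hcon => (hy i (by omega)) hcon.symm
    · have hBm1 : Bv L (fun i m => pat2 (a0 i) (a1 i) m) i (m+1)
          = pat2 (a0 i) (a1 i) m + pat2 (a0 i) (a1 i) (m+1) := by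
        rw [Bv, if_neg (by omega), if_neg hLa, Nat.add_sub_cancel]
      rw [hBm, hBm1]
      have h2 : pat2 (a0 i) (a1 i) (m+1) = 3 - pat2 (a0 i) (a1 i) (m-1) := by
        rw [show m + 1 = (m - 1) + 2 by omega, pat2_step (hb i).1 (hb i).2]
      have hbm := pat2_bounds (hb i).1 (hb i).2 (m-1)
      rw [h2]
      omega


lemma case2U (hs : 3 ≤ s) (h2 : ∀ i, L i = 2) :
    ∃ W : Fin s → ℕ → ℕ, (∀ i m, m < L i → 1 ≤ W i m ∧ W i m ≤ 1) ∧ CondW L W := by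
  classical
  refine ⟨fun _ _ => 1, fun i m _ => ⟨le_refl 1, le_refl 1⟩, ?_⟩
  have hSX : SXv (fun (_ : Fin s) (_ : ℕ) => (1:ℕ)) = s := by
    rw [SXv, Finset.sum_const, smul_eq_mul, mul_one, Finset.card_univ, Fintype.card_fin]
  have hSY : SYv L (fun (_ : Fin s) (_ : ℕ) => (1:ℕ)) = s := by
    rw [SYv, Finset.sum_const, smul_eq_mul, mul_one, Finset.card_univ, Fintype.card_fin]
  intro i m hm
  rw [h2 i] at hm
  have h2i := h2 i
  interval_cases m
  · rw [Bv, if_pos rfl, Bv, if_neg (by omega), if_neg (by omega), hSX]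
    show s ≠ 1 + 1
    omega
  · rw [Bv, if_neg (by omega), if_neg (by omega), Bv, if_neg (by omega),
      if_pos (by omega), hSY]
    show 1 + 1 ≠ s
    omega

lemma k1_lower (hs : 3 ≤ s) (hL1 : ∀ i, 1 ≤ L i) (hnot : ¬ ∀ i, L i = 2) :
    ¬ ∃ W : Fin s → ℕ → ℕ, (∀ i m, m < L i → 1 ≤ W i m ∧ W i m ≤ 1) ∧ CondW L W := by
  classical
  rintro ⟨W, hb, hc⟩
  have hW : ∀ i m, m < L i → W i m = 1 :=
    fun i m hm => le_antisymm (hb i m hm).2 (hb i m hm).1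
  have hSX : SXv W = s := by
    rw [SXv, Finset.sum_congr rfl (fun i _ => hW i 0 (hL1 i)), Finset.sum_const,
      smul_eq_mul, mul_one, Finset.card_univ, Fintype.card_fin]
  have hSY : SYv L W = s := by
    rw [SYv, Finset.sum_congr rfl (fun i _ => hW i (L i - 1) (by have := hL1 i; omega)),
      Finset.sum_const, smul_eq_mul, mul_one, Finset.card_univ, Fintype.card_fin]
  push_neg at hnot
  obtain ⟨j, hj⟩ := hnot
  rcases Nat.lt_or_ge (L j) 2 with hj2 | hj2
  · -- L j = 1
    have hLj : L j = 1 := by have := hL1 j; omega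
    have hcj := hc j 0 (by omega)
    rw [Bv, if_pos rfl, Bv, if_neg (by omega), if_pos (by omega)] at hcj
    exact hcj (by rw [hSX, hSY])
  · -- L j ≥ 3
    have hLj : 3 ≤ L j := by omega
    have hcj := hc j 1 (by omega)
    rw [Bv, if_neg (by omega), if_neg (by omega), Bv, if_neg (by omega),
      if_neg (by omega)] at hcj
    apply hcj
    rw [show (1:ℕ) - 1 = 0 from rfl, show (1:ℕ)+1-1 = 1 from rfl,
      hW j 0 (by omega), hW j 1 (by omega), hW j (1+1) (by omega)]


lemma case1_aux (hs : 3 ≤ s) (hL1 : ∀ i, 1 ≤ L i)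
    (hone : ∀ i j, L i = 1 → L j = 1 → i = j)
    (i0 : Fin s) (hi0v : (i0:ℕ) = 0) (h0 : L i0 = 1)
    (h14 : ∀ i : Fin s, (i:ℕ) ≠ 0 → L i % 4 = 1) :
    ∀ i : Fin s, i ≠ i0 → 5 ≤ L i ∧ L i % 4 = 1 := by
  intro i hi
  have hiv : (i:ℕ) ≠ 0 := by
    intro hv; exact hi (Fin.ext (by rw [hv, hi0v]))
  have h4 := h14 i hiv
  have h2 : 2 ≤ L i := by
    rcases Nat.lt_or_ge (L i) 2 with hlt | hge
    · exact absurd (hone i i0 (by have := hL1 i; omega) h0) hi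
    · exact hge
  exact ⟨by omega, h4⟩

lemma case1U (hs : 3 ≤ s) (hL1 : ∀ i, 1 ≤ L i)
    (hone : ∀ i j, L i = 1 → L j = 1 → i = j)
    (i0 : Fin s) (hi0v : (i0:ℕ) = 0) (h0 : L i0 = 1)
    (h14 : ∀ i : Fin s, (i:ℕ) ≠ 0 → L i % 4 = 1) :
    ∃ W : Fin s → ℕ → ℕ, (∀ i m, m < L i → 1 ≤ W i m ∧ W i m ≤ 3) ∧ CondW L W := by
  classical
  have h5 := case1_aux L hs hL1 hone i0 hi0v h0 h14
  set i1 : Fin s := ⟨1, by omega⟩ with hi1def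
  have hi01 : i0 ≠ i1 := by
    intro h; have := congrArg Fin.val h; rw [hi0v] at this; simp [hi1def] at this
  have h5i1 := h5 i1 (Ne.symm hi01)
  set W : Fin s → ℕ → ℕ := fun i m =>
    if i = i0 then 3 else if i = i1 ∧ m + 1 = L i1 then 3 else pat11 m with hWdef
  have hWx : ∀ i : Fin s, W i 0 = if i = i0 then 3 else 1 := by
    intro i
    by_cases hi : i = i0
    · rw [hWdef]; dsimp only; rw [if_pos hi, if_pos hi]
    · rw [hWdef]; dsimp only
      rw [if_neg hi, if_neg hi, if_neg (by rintro ⟨_, hcon⟩; omega),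
        pat11_eval0 (by norm_num)]
  have hSX : SXv W = s + 2 := by
    rw [SXv, Finset.sum_congr rfl (fun i _ => hWx i), sum_ite_one]
    omega
  have hWy : ∀ i : Fin s, W i (L i - 1) = if i = i0 then 3 else if i = i1 then 3 else 1 := by
    intro i
    by_cases hi : i = i0
    · rw [hWdef]; dsimp only; rw [if_pos hi, if_pos hi]
    · rw [hWdef]; dsimp only; rw [if_neg hi, if_neg hi]
      by_cases hi1 : i = i1
      · subst hi1; rw [if_pos ⟨rfl, by omega⟩, if_pos rfl]
      · rw [if_neg (by rintro ⟨hcon, _⟩; exact hi1 hcon), if_neg hi1]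
        exact pat11_eval0 (by have := h5 i hi; omega)
  have hSY : SYv L W = s + 4 := by
    rw [SYv, Finset.sum_congr rfl (fun i _ => hWy i), sum_ite_two i0 i1 hi01]
    omega
  refine ⟨W, ?_, ?_⟩
  · intro i m hm
    rw [hWdef]; dsimp only
    split_ifs with hh1 hh2
    · omega
    · omega
    · have := pat11_bounds m; omega
  · intro i m hm
    by_cases hi : i = i0
    · subst hi
      have hm0 : m = 0 := by omega
      subst hm0
      rw [Bv, if_pos rfl, Bv, if_neg (by omega), if_pos (by omega), hSX, hSY]
      omega
    · obtain ⟨hL5, hL4⟩ := h5 i hi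
      have hWv : ∀ m', W i m' = if i = i1 ∧ m' + 1 = L i then 3 else pat11 m' := by
        intro m'
        rw [hWdef]; dsimp only; rw [if_neg hi]
        by_cases hi1 : i = i1
        · subst hi1; rfl
        · rw [if_neg (by rintro ⟨h,_⟩; exact hi1 h), if_neg (by rintro ⟨h,_⟩; exact hi1 h)]
      rcases Nat.eq_zero_or_pos m with hm0 | hm0
      · subst hm0
        rw [Bv, if_pos rfl, Bv, if_neg (by omega), if_neg (by omega), hSX]
        rw [show (0:ℕ)+1-1 = 0 from rfl, show (0:ℕ)+1 = 1 from rfl]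
        rw [hWv 0]
        rw [if_neg (by rintro ⟨_,h⟩; omega)]
        rw [hWv 1]
        rw [if_neg (by rintro ⟨_,h⟩; omega)]
        rw [pat11_eval0 (by norm_num), pat11_eval1 (by norm_num)]
        omega
      · by_cases hLa : m + 1 = L i
        · rw [Bv, if_neg (by omega), if_neg (by omega), Bv, if_neg (by omega),
            if_pos hLa, hSY]
          rw [hWv (m-1)]
          rw [if_neg (by rintro ⟨_,h⟩; omega)]
          rw [hWv m]
          rw [pat11_eval3 (by omega)]
          by_cases hi1 : i = i1
          · rw [if_pos ⟨hi1, hLa⟩]; omega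
          · rw [if_neg (by rintro ⟨h,_⟩; exact hi1 h), pat11_eval0 (by omega)]; omega
        · rw [Bv, if_neg (by omega), if_neg (by omega), Bv, if_neg (by omega),
            if_neg hLa, Nat.add_sub_cancel]
          rw [hWv (m-1)]
          rw [if_neg (by rintro ⟨_,h⟩; omega)]
          rw [hWv m]
          rw [if_neg (by rintro ⟨_,h⟩; exact hLa h)]
          rw [hWv (m+1)]
          by_cases hsp : i = i1 ∧ m + 1 + 1 = L i
          · rw [if_pos hsp, pat11_eval2 (by omega)]
            have := pat11_bounds m
            omega
          · rw [if_neg hsp]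
            rw [show m + 1 = (m - 1) + 2 by omega, pat11_step]
            have := pat11_bounds (m-1)
            omega

lemma case1L (hs : 3 ≤ s) (hL1 : ∀ i, 1 ≤ L i)
    (hone : ∀ i j, L i = 1 → L j = 1 → i = j)
    (i0 : Fin s) (hi0v : (i0:ℕ) = 0) (h0 : L i0 = 1)
    (h14 : ∀ i : Fin s, (i:ℕ) ≠ 0 → L i % 4 = 1) :
    ¬ ∃ W : Fin s → ℕ → ℕ, (∀ i m, m < L i → 1 ≤ W i m ∧ W i m ≤ 2) ∧ CondW L W := by
  classical
  rintro ⟨W, hb, hc⟩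
  have h5 := case1_aux L hs hL1 hone i0 hi0v h0 h14
  have hkey : ∀ i : Fin s, i ≠ i0 → ∀ j : ℕ, 4*j + 1 ≤ L i → W i (4*j) = W i 0 := by
    intro i hi
    obtain ⟨hL5, hL4⟩ := h5 i hi
    intro j
    induction j with
    | zero => intro _; rfl
    | succ n ih =>
      intro hj
      have hj' : 4*n + 1 ≤ L i := by omega
      have e1 := hc i (4*n+1) (by omega)
      rw [Bv, if_neg (by omega), if_neg (by omega), Bv, if_neg (by omega),
        if_neg (by omega)] at e1
      rw [show 4*n+1-1 = 4*n by omega, show 4*n+1+1-1 = 4*n+1 by omega,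
        show 4*n+1+1 = 4*n+2 by omega] at e1
      have e2 := hc i (4*n+3) (by omega)
      rw [Bv, if_neg (by omega), if_neg (by omega), Bv, if_neg (by omega),
        if_neg (by omega)] at e2
      rw [show 4*n+3-1 = 4*n+2 by omega, show 4*n+3+1-1 = 4*n+3 by omega,
        show 4*n+3+1 = 4*n+4 by omega] at e2
      have b0 := hb i (4*n) (by omega)
      have b2 := hb i (4*n+2) (by omega)
      have b4 := hb i (4*n+4) (by omega)
      have hW4 : W i (4*n+4) = W i (4*n) := by omega
      rw [show 4*(n+1) = 4*n+4 by ring, hW4]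
      exact ih hj'
  have hSY : SYv L W = SXv W := by
    rw [SYv, SXv]
    apply Finset.sum_congr rfl
    intro i _
    by_cases hi : i = i0
    · subst hi; rw [h0]
    · obtain ⟨hL5, hL4⟩ := h5 i hi
      have hq : L i - 1 = 4 * ((L i - 1)/4) := by omega
      calc W i (L i - 1) = W i (4*((L i - 1)/4)) := by rw [← hq]
        _ = W i 0 := hkey i hi _ (by omega)
  have hfin := hc i0 0 (by omega)
  rw [Bv, if_pos rfl, Bv, if_neg (by omega), if_pos (by omega)] at hfin
  exact hfin hSY.symm


lemma card_filter_le_sub_one (P : Fin s → Prop) [DecidablePred P] (a : Fin s)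
    (ha : ¬ P a) : (Finset.univ.filter P).card ≤ s - 1 := by
  have hsub : Finset.univ.filter P ⊆ Finset.univ.erase a := by
    intro x hx
    rw [Finset.mem_filter] at hx
    exact Finset.mem_erase.2 ⟨fun hcon => ha (hcon ▸ hx.2), Finset.mem_univ x⟩
  have := Finset.card_le_card hsub
  rwa [Finset.card_erase_of_mem (Finset.mem_univ a), Finset.card_univ,
    Fintype.card_fin] at this

lemma card_filter_le_sub_two (P : Fin s → Prop) [DecidablePred P] (a b : Fin s)
    (hab : a ≠ b) (ha : ¬ P a) (hb : ¬ P b) : (Finset.univ.filter P).card ≤ s - 2 := by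
  have hbm : b ∈ Finset.univ.erase a := Finset.mem_erase.2 ⟨hab.symm, Finset.mem_univ b⟩
  have hsub : Finset.univ.filter P ⊆ (Finset.univ.erase a).erase b := by
    intro x hx
    rw [Finset.mem_filter] at hx
    exact Finset.mem_erase.2 ⟨fun hcon => hb (hcon ▸ hx.2),
      Finset.mem_erase.2 ⟨fun hcon => ha (hcon ▸ hx.2), Finset.mem_univ x⟩⟩
  have := Finset.card_le_card hsub
  rw [Finset.card_erase_of_mem hbm, Finset.card_erase_of_mem (Finset.mem_univ a),
    Finset.card_univ, Fintype.card_fin] at this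
  omega

lemma case3U (hs : 3 ≤ s) (hL1 : ∀ i, 1 ≤ L i)
    (hone : ∀ i j, L i = 1 → L j = 1 → i = j)
    (i0 : Fin s) (hi0v : (i0:ℕ) = 0)
    (hmin : ∀ i, L i0 ≤ L i)
    (hnot1 : ¬(L i0 = 1 ∧ ∀ i : Fin s, (i:ℕ) ≠ 0 → L i % 4 = 1)) :
    ∃ W : Fin s → ℕ → ℕ, (∀ i m, m < L i → 1 ≤ W i m ∧ W i m ≤ 2) ∧ CondW L W := by
  classical
  set cT := (Finset.univ.filter (fun i : Fin s => L i % 4 = 3)).card with hcT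
  have hcTs : cT ≤ s := by
    rw [hcT]
    exact le_trans (Finset.card_filter_le _ _)
      (by rw [Finset.card_univ, Fintype.card_fin])
  by_cases hB : L i0 = 1
  · -- case B : shortest path has length 1
    have hi0T : ¬ (L i0 % 4 = 3) := by omega
    obtain ⟨j, hjv, hj4⟩ : ∃ i : Fin s, (i:ℕ) ≠ 0 ∧ L i % 4 ≠ 1 := by
      by_contra hcon
      push_neg at hcon
      exact hnot1 ⟨hB, fun i hi => hcon i hi⟩
    have hji0 : j ≠ i0 := fun h => hjv (by rw [h, hi0v])
    have hj2 : 2 ≤ L j := by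
      rcases Nat.lt_or_ge (L j) 2 with hlt | hge
      · exact absurd (hone j i0 (by have := hL1 j; omega) hB) hji0
      · exact hge
    by_cases hT0 : cT = 0
    · -- B0 : no path ≡ 3 (mod 4)
      have hemp : Finset.univ.filter (fun i : Fin s => L i % 4 = 3) = ∅ := by
        apply Finset.card_eq_zero.1
        rw [← hcT]; exact hT0
      have hres3 : ∀ i : Fin s, L i % 4 ≠ 3 := by
        intro i hi
        have hmem : i ∈ Finset.univ.filter (fun i : Fin s => L i % 4 = 3) :=
          Finset.mem_filter.2 ⟨Finset.mem_univ i, hi⟩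
        rw [hemp] at hmem
        exact absurd hmem (Finset.notMem_empty i)
      have hjres : L j % 4 = 0 ∨ L j % 4 = 2 := by have := hres3 j; omega
      set a0 : Fin s → ℕ := fun _ => 2 with ha0
      set a1 : Fin s → ℕ := fun i => if i = j then (if L i % 4 = 2 then 1 else 2)
        else (if L i % 4 = 0 then 1 else 2) with ha1
      have hab : ∀ i, (1 ≤ a0 i ∧ a0 i ≤ 2) ∧ (1 ≤ a1 i ∧ a1 i ≤ 2) := by
        intro i; simp only [ha0, ha1]; split_ifs <;> omega
      have hSX : SXv (fun i m => pat2 (a0 i) (a1 i) m) = 2 * s := by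
        rw [SX_pat]; simp only [ha0]
        rw [Finset.sum_const, smul_eq_mul, Finset.card_univ, Fintype.card_fin]
        ring
      have hlast : ∀ i : Fin s, pat2 (a0 i) (a1 i) (L i - 1) = if i = j then 1 else 2 := by
        intro i
        rw [pat2_last_eval _ _ _ (hL1 i)]
        by_cases hij : i = j
        · subst hij
          simp only [ha0, ha1, if_pos rfl]
          rcases hjres with h | h <;> rw [h] <;> norm_num
        · have h4 : L i % 4 = 0 ∨ L i % 4 = 1 ∨ L i % 4 = 2 := by
            have := hres3 i; omega
          simp only [ha0, ha1, if_neg hij]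
          rcases h4 with h | h | h <;> rw [h] <;> norm_num
      have hSY : SYv L (fun i m => pat2 (a0 i) (a1 i) m) = 1 + (s-1) * 2 := by
        rw [SYv, Finset.sum_congr rfl (fun i _ => hlast i), sum_ite_one]
      refine ⟨_, fun i m hm => pat2_bounds (hab i).1 (hab i).2 m,
        cond_of_pat L hL1 a0 a1 hab ?_ ?_ ?_⟩
      · intro i h2i
        rw [hSX]
        have hb1 := (hab i).1; have hb2 := (hab i).2
        omega
      · intro i h2i
        rw [hSY]
        have hbd1 := pat2_bounds (hab i).1 (hab i).2 (L i - 2)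
        have hbd2 := pat2_bounds (hab i).1 (hab i).2 (L i - 1)
        omega
      · intro i h1i
        rw [hSX, hSY]
        omega
    · -- B1 : some path ≡ 3 (mod 4)
      set a0 : Fin s → ℕ := fun _ => 2 with ha0
      set a1 : Fin s → ℕ := fun i => if L i % 4 = 3 ∨ L i % 4 = 0 then 1 else 2 with ha1
      have hab : ∀ i, (1 ≤ a0 i ∧ a0 i ≤ 2) ∧ (1 ≤ a1 i ∧ a1 i ≤ 2) := by
        intro i; simp only [ha0, ha1]; split_ifs <;> omega
      have hSX : SXv (fun i m => pat2 (a0 i) (a1 i) m) = 2 * s := by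
        rw [SX_pat]; simp only [ha0]
        rw [Finset.sum_const, smul_eq_mul, Finset.card_univ, Fintype.card_fin]
        ring
      have hlast : ∀ i : Fin s, pat2 (a0 i) (a1 i) (L i - 1)
          = if L i % 4 = 3 then 1 else 2 := by
        intro i
        rw [pat2_last_eval _ _ _ (hL1 i)]
        have h4 : L i % 4 = 0 ∨ L i % 4 = 1 ∨ L i % 4 = 2 ∨ L i % 4 = 3 := by omega
        simp only [ha0, ha1]
        rcases h4 with h | h | h | h <;> rw [h] <;> norm_num
      have hSY : SYv L (fun i m => pat2 (a0 i) (a1 i) m) = cT * 1 + (s - cT) * 2 := by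
        rw [SYv, Finset.sum_congr rfl (fun i _ => hlast i), sum_ite_pred, ← hcT]
      refine ⟨_, fun i m hm => pat2_bounds (hab i).1 (hab i).2 m,
        cond_of_pat L hL1 a0 a1 hab ?_ ?_ ?_⟩
      · intro i h2i
        rw [hSX]
        have hb1 := (hab i).1; have hb2 := (hab i).2
        omega
      · intro i h2i
        rw [hSY, pat2_e_eval _ _ _ h2i]
        have h4 : L i % 4 = 0 ∨ L i % 4 = 1 ∨ L i % 4 = 2 ∨ L i % 4 = 3 := by omega
        have hii0 : i ≠ i0 := fun hcon => by rw [hcon, hB] at h2i; omega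
        simp only [ha0, ha1]
        rcases h4 with h | h | h | h
        · have hle : cT ≤ s - 1 := by
            rw [hcT]; exact card_filter_le_sub_one _ i (by omega)
          rw [h]; norm_num; omega
        · have hle : cT ≤ s - 1 := by
            rw [hcT]; exact card_filter_le_sub_one _ i (by omega)
          rw [h]; norm_num; omega
        · have hle : cT ≤ s - 2 := by
            rw [hcT]; exact card_filter_le_sub_two _ i i0 hii0 (by omega) (by omega)
          rw [h]; norm_num; omega
        · rw [h]; norm_num; omega
      · intro i h1i
        rw [hSX, hSY]
        omega
  · -- case A : all paths have length ≥ 2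
    have hall2 : ∀ i, 2 ≤ L i := fun i =>
      le_trans (by have := hL1 i0; omega) (hmin i)
    by_cases hspc : s = 3 ∧ cT = 2 ∧ ∃ j : Fin s, L j % 4 = 2
    · -- A special : s = 3, two paths ≡ 3 (mod 4), one ≡ 2 (mod 4)
      obtain ⟨h3s, hcT2, j, hjres⟩ := hspc
      have hjT : ¬ (L j % 4 = 3) := by omega
      have hfill : ∀ i : Fin s, i ≠ j → L i % 4 = 3 := by
        intro i hij
        have hsub : Finset.univ.filter (fun i : Fin s => L i % 4 = 3)
            ⊆ Finset.univ.erase j := by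
          intro x hx
          rw [Finset.mem_filter] at hx
          exact Finset.mem_erase.2 ⟨fun hcon => hjT (hcon ▸ hx.2), Finset.mem_univ x⟩
        have hcards : (Finset.univ.erase j).card
            ≤ (Finset.univ.filter (fun i : Fin s => L i % 4 = 3)).card := by
          rw [Finset.card_erase_of_mem (Finset.mem_univ j), Finset.card_univ,
            Fintype.card_fin, ← hcT, hcT2, h3s]
        have heq := Finset.eq_of_subset_of_card_le hsub hcards
        have hmem : i ∈ Finset.univ.erase j := Finset.mem_erase.2 ⟨hij, Finset.mem_univ i⟩
        rw [← heq] at hmem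
        exact (Finset.mem_filter.1 hmem).2
      set a0 : Fin s → ℕ := fun i => if i = j then 1 else 2 with ha0
      set a1 : Fin s → ℕ := fun i => if i = j then 2 else 1 with ha1
      have hab : ∀ i, (1 ≤ a0 i ∧ a0 i ≤ 2) ∧ (1 ≤ a1 i ∧ a1 i ≤ 2) := by
        intro i; simp only [ha0, ha1]; split_ifs <;> omega
      have hSX : SXv (fun i m => pat2 (a0 i) (a1 i) m) = 1 + (s-1) * 2 := by
        rw [SX_pat]; simp only [ha0]; exact sum_ite_one j 1 2
      have hlast : ∀ i : Fin s, pat2 (a0 i) (a1 i) (L i - 1) = if i = j then 2 else 1 := by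
        intro i
        rw [pat2_last_eval _ _ _ (hL1 i)]
        by_cases hij : i = j
        · subst hij
          simp only [ha0, ha1, if_pos rfl]
          rw [hjres]; norm_num
        · simp only [ha0, ha1, if_neg hij]
          rw [hfill i hij]; norm_num
      have hSY : SYv L (fun i m => pat2 (a0 i) (a1 i) m) = 2 + (s-1) * 1 := by
        rw [SYv, Finset.sum_congr rfl (fun i _ => hlast i), sum_ite_one]
      refine ⟨_, fun i m hm => pat2_bounds (hab i).1 (hab i).2 m,
        cond_of_pat L hL1 a0 a1 hab ?_ ?_ ?_⟩
      · intro i h2i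
        rw [hSX]
        by_cases hij : i = j <;> simp only [ha0, ha1, hij] <;> norm_num <;> omega
      · intro i h2i
        rw [hSY, pat2_e_eval _ _ _ h2i]
        by_cases hij : i = j
        · subst hij
          simp only [ha0, ha1, if_pos rfl]
          rw [hjres]; norm_num; omega
        · simp only [ha0, ha1, if_neg hij]
          rw [hfill i hij]; norm_num; omega
      · intro i h1i
        exact absurd h1i (by have := hall2 i; omega)
    · -- A default
      set a0 : Fin s → ℕ := fun _ => 2 with ha0
      set a1 : Fin s → ℕ := fun i => if L i % 4 = 3 ∨ L i % 4 = 0 then 1 else 2 with ha1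
      have hab : ∀ i, (1 ≤ a0 i ∧ a0 i ≤ 2) ∧ (1 ≤ a1 i ∧ a1 i ≤ 2) := by
        intro i; simp only [ha0, ha1]; split_ifs <;> omega
      have hSX : SXv (fun i m => pat2 (a0 i) (a1 i) m) = 2 * s := by
        rw [SX_pat]; simp only [ha0]
        rw [Finset.sum_const, smul_eq_mul, Finset.card_univ, Fintype.card_fin]
        ring
      have hlast : ∀ i : Fin s, pat2 (a0 i) (a1 i) (L i - 1)
          = if L i % 4 = 3 then 1 else 2 := by
        intro i
        rw [pat2_last_eval _ _ _ (hL1 i)]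
        have h4 : L i % 4 = 0 ∨ L i % 4 = 1 ∨ L i % 4 = 2 ∨ L i % 4 = 3 := by omega
        simp only [ha0, ha1]
        rcases h4 with h | h | h | h <;> rw [h] <;> norm_num
      have hSY : SYv L (fun i m => pat2 (a0 i) (a1 i) m) = cT * 1 + (s - cT) * 2 := by
        rw [SYv, Finset.sum_congr rfl (fun i _ => hlast i), sum_ite_pred, ← hcT]
      refine ⟨_, fun i m hm => pat2_bounds (hab i).1 (hab i).2 m,
        cond_of_pat L hL1 a0 a1 hab ?_ ?_ ?_⟩
      · intro i h2i
        rw [hSX]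
        have hb1 := (hab i).1; have hb2 := (hab i).2
        omega
      · intro i h2i
        rw [hSY, pat2_e_eval _ _ _ h2i]
        have h4 : L i % 4 = 0 ∨ L i % 4 = 1 ∨ L i % 4 = 2 ∨ L i % 4 = 3 := by omega
        simp only [ha0, ha1]
        rcases h4 with h | h | h | h
        · have hle : cT ≤ s - 1 := by
            rw [hcT]; exact card_filter_le_sub_one _ i (by omega)
          rw [h]; norm_num; omega
        · have hle : cT ≤ s - 1 := by
            rw [hcT]; exact card_filter_le_sub_one _ i (by omega)
          rw [h]; norm_num; omega
        · have hle : cT ≤ s - 1 := by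
            rw [hcT]; exact card_filter_le_sub_one _ i (by omega)
          have hns : ¬ (s = 3 ∧ cT = 2) := fun hcon => hspc ⟨hcon.1, hcon.2, ⟨i, h⟩⟩
          rw [h]; norm_num; omega
        · rw [h]; norm_num; omega
      · intro i h1i
        exact absurd h1i (by have := hall2 i; omega)

end Comb

end ThetaAux

/-- For `r` even, `s ≥ 3`, `t = r/2`, and the `r`-uniform theta hypergraph
`H = Θ_t^r(ℓ_1,…,ℓ_s)` with `ℓ_1 ≤ ℓ_2 ≤ … ≤ ℓ_s`: `χ^e(H) = 3` if `ℓ_1 = 1`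
and `ℓ_i ≡ 1 (mod 4)` for all `i ≥ 2`; `χ^e(H) = 1` if all `ℓ_i = 2`; and
`χ^e(H) = 2` otherwise. -/
theorem chiE_theta_half (r t s : ℕ) (L : Fin s → ℕ) (hr : r = 2 * t) (hs : 3 ≤ s)
    (ht : 1 ≤ t)
    (hL : ∀ i, t ≤ L i * (r - t))
    (hone : ∀ i j, L i = 1 → L j = 1 → i = j)
    (hmono : ∀ i j : Fin s, i ≤ j → L i ≤ L j) :
    ((L ⟨0, by omega⟩ = 1 ∧ ∀ i : Fin s, (i : ℕ) ≠ 0 → L i % 4 = 1) →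
      IsLeast {k : ℕ | 0 < k ∧ HasNSDEdgeWeighting (thetaEdges r t L) k} 3) ∧
    ((∀ i, L i = 2) →
      IsLeast {k : ℕ | 0 < k ∧ HasNSDEdgeWeighting (thetaEdges r t L) k} 1) ∧
    ((¬(L ⟨0, by omega⟩ = 1 ∧ ∀ i : Fin s, (i : ℕ) ≠ 0 → L i % 4 = 1) ∧
        ¬(∀ i, L i = 2)) →
      IsLeast {k : ℕ | 0 < k ∧ HasNSDEdgeWeighting (thetaEdges r t L) k} 2) := by
  subst hr
  have htt : 2*t - t = t := by omega
  have hL1 : ∀ i, 1 ≤ L i := by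
    intro i
    by_contra hcon
    push_neg at hcon
    have h0' : L i = 0 := by omega
    have hLi := hL i
    rw [h0', zero_mul] at hLi
    omega
  have hiff := fun k => hasNSD_iff L ht hL1 hone k
  have hi0v : ((⟨0, by omega⟩ : Fin s) : ℕ) = 0 := rfl
  have hmin : ∀ i, L ⟨0, by omega⟩ ≤ L i := fun i => hmono _ i (by simp [Fin.le_def])
  refine ⟨?_, ?_, ?_⟩
  · rintro ⟨h0, h14⟩
    constructor
    · exact ⟨by norm_num, (hiff 3).2 (case1U L hs hL1 hone _ hi0v h0 h14)⟩
    · rintro k ⟨hk0, hkN⟩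
      by_contra hklt
      push_neg at hklt
      obtain ⟨W, hbW, hcW⟩ := (hiff k).1 hkN
      exact case1L L hs hL1 hone _ hi0v h0 h14
        ⟨W, fun i m hm => ⟨(hbW i m hm).1, le_trans (hbW i m hm).2 (by omega)⟩, hcW⟩
  · intro h2
    constructor
    · obtain ⟨W, hbW, hcW⟩ := case2U L hs h2
      exact ⟨by norm_num, (hiff 1).2 ⟨W, hbW, hcW⟩⟩
    · rintro k ⟨hk0, _⟩
      exact hk0
  · rintro ⟨hn1, hn2⟩
    constructor
    · exact ⟨by norm_num, (hiff 2).2 (case3U L hs hL1 hone _ hi0v hmin hn1)⟩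
    · rintro k ⟨hk0, hkN⟩
      by_contra hklt
      push_neg at hklt
      obtain ⟨W, hbW, hcW⟩ := (hiff k).1 hkN
      exact k1_lower L hs hL1 hn2
        ⟨W, fun i m hm => ⟨(hbW i m hm).1, le_trans (hbW i m hm).2 (by omega)⟩, hcW⟩
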